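/- Let P and P̃ be irreducible row-stochastic S×S real matrices that differ only in their n-th row (i.e., P_{ik} = P̃_{ik} for all i ≠ n and all k). Let μ, μ̃ be their stationary distributions, let T_{ij}, T̃_{ij} be their mean first passage times, and set E = P̃ − P. If T_{ij} ≤ D′ for all i, j, then for all i ≠ j, |T̃_{ij} − T_{ij}| ≤ (μ_j / μ̃_j) · ‖E‖_∞ · S · D′². -/

import Mathlib

/-- A row-stochastic matrix: nonnegative entries, each row sums to 1. -/
def RowStochastic {S : ℕ} (P : Matrix (Fin S) (Fin S) ℝ) : Prop :=
  (∀ i j, 0 ≤ P i j) ∧ ∀ i, ∑ j, P i j = 1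

/-- Irreducibility of a Markov transition matrix: every state reaches every state. -/
def MCIrreducible {S : ℕ} (P : Matrix (Fin S) (Fin S) ℝ) : Prop :=
  ∀ i j, ∃ n : ℕ, 1 ≤ n ∧ 0 < (P ^ n) i j

/-- `μ` is a stationary distribution of `P`. -/
def IsStationaryDist {S : ℕ} (P : Matrix (Fin S) (Fin S) ℝ) (μ : Fin S → ℝ) : Prop :=
  (∀ j, 0 ≤ μ j) ∧ (∑ j, μ j = 1) ∧ ∀ j, ∑ i, μ i * P i j = μ j

/-- `T` is the matrix of mean first passage times of `P`: the unique positive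
solution of `T i j = 1 + ∑_{k ≠ j} P i k * T k j`. -/
def IsMFPT {S : ℕ} (P T : Matrix (Fin S) (Fin S) ℝ) : Prop :=
  (∀ i j, 0 < T i j) ∧
    ∀ i j, T i j = 1 + ∑ k ∈ Finset.univ.filter (fun k => k ≠ j), P i k * T k j

/-- The entrywise max-norm ‖E‖_∞ of a matrix. -/
noncomputable def matNormInf {S : ℕ} (E : Matrix (Fin S) (Fin S) ℝ) : ℝ :=
  ⨆ i, ⨆ j, |E i j|


variable {S : ℕ}

/-- Zero-column matrix: `P` with column `j` zeroed out. -/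
def auxQ (P : Matrix (Fin S) (Fin S) ℝ) (j : Fin S) : Matrix (Fin S) (Fin S) ℝ :=
  Matrix.of fun i k => if k = j then 0 else P i k

lemma auxQ_apply (P : Matrix (Fin S) (Fin S) ℝ) (j i k : Fin S) :
    auxQ P j i k = if k = j then 0 else P i k := rfl

/-- L0: nonnegative-source solutions of `v = e + Q v` are nonnegative. -/
lemma aux_nonneg_sol (Q : Matrix (Fin S) (Fin S) ℝ) (hQ : ∀ i k, 0 ≤ Q i k)
    (t : Fin S → ℝ) (ht : ∀ i, 0 < t i)
    (heq : ∀ i, t i = 1 + ∑ k, Q i k * t k)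
    (v e : Fin S → ℝ) (he : ∀ i, 0 ≤ e i)
    (hv : ∀ i, v i = e i + ∑ k, Q i k * v k) : ∀ i, 0 ≤ v i := by
  by_contra hcon
  push_neg at hcon
  obtain ⟨i₁, hi₁⟩ := hcon
  have hne : (Finset.univ : Finset (Fin S)).Nonempty := ⟨i₁, Finset.mem_univ _⟩
  obtain ⟨i₀, -, hmin⟩ := Finset.exists_min_image Finset.univ (fun i => v i / t i) hne
  set r := v i₀ / t i₀ with hr
  have hrneg : r < 0 := by
    have h1 : r ≤ v i₁ / t i₁ := hmin i₁ (Finset.mem_univ _)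
    have : v i₁ / t i₁ < 0 := div_neg_of_neg_of_pos hi₁ (ht i₁)
    linarith
  have hbound : ∀ i, r * t i ≤ v i := by
    intro i
    have h1 : r ≤ v i / t i := hmin i (Finset.mem_univ _)
    calc r * t i ≤ (v i / t i) * t i := by
          exact mul_le_mul_of_nonneg_right h1 (le_of_lt (ht i))
      _ = v i := div_mul_cancel₀ _ (ne_of_gt (ht i))
  have hvi₀ : v i₀ = r * t i₀ := (div_mul_cancel₀ _ (ne_of_gt (ht i₀))).symm
  have hsum : ∑ k, Q i₀ k * (r * t k) ≤ ∑ k, Q i₀ k * v k := by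
    apply Finset.sum_le_sum
    intro k _
    exact mul_le_mul_of_nonneg_left (hbound k) (hQ i₀ k)
  have hQt : ∑ k, Q i₀ k * t k = t i₀ - 1 := by
    have := heq i₀; linarith
  have hleft : ∑ k, Q i₀ k * (r * t k) = r * (t i₀ - 1) := by
    rw [← hQt, Finset.mul_sum]
    apply Finset.sum_congr rfl
    intro k _; ring
  have : v i₀ ≥ e i₀ + r * (t i₀ - 1) := by
    rw [hv i₀]; rw [hleft] at hsum; linarith
  have : v i₀ ≥ r * t i₀ - r := by have := he i₀; linarith
  rw [hvi₀] at this
  linarith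

/-- L1: solutions of `x = Q x` vanish. -/
lemma aux_zero_sol (Q : Matrix (Fin S) (Fin S) ℝ) (hQ : ∀ i k, 0 ≤ Q i k)
    (t : Fin S → ℝ) (ht : ∀ i, 0 < t i)
    (heq : ∀ i, t i = 1 + ∑ k, Q i k * t k)
    (x : Fin S → ℝ) (hx : ∀ i, x i = ∑ k, Q i k * x k) : ∀ i, x i = 0 := by
  intro i
  rcases Nat.eq_zero_or_pos S with hS | hS
  · exact absurd (i.2) (by omega)
  have hne : (Finset.univ : Finset (Fin S)).Nonempty := ⟨i, Finset.mem_univ _⟩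
  obtain ⟨i₀, -, hmax⟩ := Finset.exists_max_image Finset.univ (fun i => |x i| / t i) hne
  set r := |x i₀| / t i₀ with hr
  have hr0 : 0 ≤ r := div_nonneg (abs_nonneg _) (le_of_lt (ht i₀))
  have hbound : ∀ k, |x k| ≤ r * t k := by
    intro k
    have h1 : |x k| / t k ≤ r := hmax k (Finset.mem_univ _)
    calc |x k| = (|x k| / t k) * t k := (div_mul_cancel₀ _ (ne_of_gt (ht k))).symm
      _ ≤ r * t k := mul_le_mul_of_nonneg_right h1 (le_of_lt (ht k))
  rcases eq_or_lt_of_le hr0 with h0 | hpos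
  · have : |x i| ≤ r * t i := hbound i
    rw [← h0] at this
    simp at this
    exact this
  · exfalso
    have hxi₀ : |x i₀| = r * t i₀ := (div_mul_cancel₀ _ (ne_of_gt (ht i₀))).symm
    have h1 : |x i₀| ≤ ∑ k, Q i₀ k * |x k| := by
      rw [hx i₀]
      calc |∑ k, Q i₀ k * x k| ≤ ∑ k, |Q i₀ k * x k| := Finset.abs_sum_le_sum_abs _ _
        _ = ∑ k, Q i₀ k * |x k| := by
            apply Finset.sum_congr rfl; intro k _
            rw [abs_mul, abs_of_nonneg (hQ i₀ k)]
    have h2 : ∑ k, Q i₀ k * |x k| ≤ ∑ k, Q i₀ k * (r * t k) := by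
      apply Finset.sum_le_sum; intro k _
      exact mul_le_mul_of_nonneg_left (hbound k) (hQ i₀ k)
    have hQt : ∑ k, Q i₀ k * t k = t i₀ - 1 := by have := heq i₀; linarith
    have h3 : ∑ k, Q i₀ k * (r * t k) = r * (t i₀ - 1) := by
      rw [← hQt, Finset.mul_sum]
      apply Finset.sum_congr rfl; intro k _; ring
    rw [hxi₀] at h1
    rw [h3] at h2
    nlinarith

/-- Invertibility of `1 - Q`. -/
lemma aux_det (Q : Matrix (Fin S) (Fin S) ℝ) (hQ : ∀ i k, 0 ≤ Q i k)
    (t : Fin S → ℝ) (ht : ∀ i, 0 < t i)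
    (heq : ∀ i, t i = 1 + ∑ k, Q i k * t k) : IsUnit (1 - Q).det := by
  rw [isUnit_iff_ne_zero]
  intro hdet
  obtain ⟨v, hv0, hv⟩ := Matrix.exists_mulVec_eq_zero_iff.mpr hdet
  apply hv0
  funext i
  have hvi : ∀ i, v i = ∑ k, Q i k * v k := by
    intro i'
    have := congrFun hv i'
    simp [Matrix.mulVec, dotProduct, Matrix.sub_apply, Matrix.one_apply, sub_mul,
      Finset.sum_sub_distrib, ite_mul] at this
    linarith [this]
  exact aux_zero_sol Q hQ t ht heq v hvi i

section Inv

/-- Entrywise identity `(1-Q) * (1-Q)⁻¹ = 1`. -/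
lemma aux_AN (Q : Matrix (Fin S) (Fin S) ℝ) (hdet : IsUnit (1 - Q).det) (i k : Fin S) :
    (1 - Q)⁻¹ i k - ∑ m, Q i m * (1 - Q)⁻¹ m k = if i = k then 1 else 0 := by
  have h := Matrix.mul_nonsing_inv _ hdet
  have h2 := congrFun (congrFun h i) k
  rw [Matrix.mul_apply, Matrix.one_apply] at h2
  rw [← h2]
  simp [Matrix.sub_apply, Matrix.one_apply, sub_mul, Finset.sum_sub_distrib, ite_mul,
    Finset.sum_ite_eq]

/-- Entrywise identity `(1-Q)⁻¹ * (1-Q) = 1`. -/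
lemma aux_NA (Q : Matrix (Fin S) (Fin S) ℝ) (hdet : IsUnit (1 - Q).det) (i k : Fin S) :
    (1 - Q)⁻¹ i k - ∑ m, (1 - Q)⁻¹ i m * Q m k = if i = k then 1 else 0 := by
  have h := Matrix.nonsing_inv_mul _ hdet
  have h2 := congrFun (congrFun h i) k
  rw [Matrix.mul_apply, Matrix.one_apply] at h2
  rw [← h2]
  simp [Matrix.sub_apply, Matrix.one_apply, mul_sub, Finset.sum_sub_distrib, mul_ite,
    Finset.sum_ite_eq']

/-- Solve `x - Qx = y` via `N`: `x i = ∑ k, N i k * y k`. -/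
lemma aux_solve (Q : Matrix (Fin S) (Fin S) ℝ) (hdet : IsUnit (1 - Q).det)
    (x y : Fin S → ℝ) (hxy : ∀ i, x i - ∑ k, Q i k * x k = y i) (i : Fin S) :
    x i = ∑ k, (1 - Q)⁻¹ i k * y k := by
  set N := (1 - Q)⁻¹ with hN
  calc x i = ∑ k, (if i = k then (1:ℝ) else 0) * x k := by
        simp [ite_mul, Finset.sum_ite_eq]
    _ = ∑ k, (N i k - ∑ m, N i m * Q m k) * x k := by
        apply Finset.sum_congr rfl; intro k _
        rw [aux_NA Q hdet i k]
    _ = ∑ k, N i k * x k - ∑ k, (∑ m, N i m * Q m k) * x k := by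
        rw [← Finset.sum_sub_distrib]
        apply Finset.sum_congr rfl; intro k _; ring
    _ = ∑ k, N i k * x k - ∑ m, N i m * ∑ k, Q m k * x k := by
        congr 1
        calc ∑ k, (∑ m, N i m * Q m k) * x k
            = ∑ k, ∑ m, N i m * (Q m k * x k) := by
              apply Finset.sum_congr rfl; intro k _
              rw [Finset.sum_mul]; apply Finset.sum_congr rfl; intro m _; ring
          _ = ∑ m, ∑ k, N i m * (Q m k * x k) := Finset.sum_comm
          _ = ∑ m, N i m * ∑ k, Q m k * x k := by
              apply Finset.sum_congr rfl; intro m _; rw [Finset.mul_sum]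
    _ = ∑ k, N i k * (x k - ∑ m, Q k m * x m) := by
        simp [mul_sub, Finset.sum_sub_distrib]
    _ = ∑ k, N i k * y k := by
        apply Finset.sum_congr rfl; intro k _; rw [hxy k]

end Inv

/-- Row version: solve `x - xQ = y`. -/
lemma aux_solve_row (Q : Matrix (Fin S) (Fin S) ℝ) (hdet : IsUnit (1 - Q).det)
    (x y : Fin S → ℝ) (hxy : ∀ k, x k - ∑ m, x m * Q m k = y k) (k : Fin S) :
    x k = ∑ m, y m * (1 - Q)⁻¹ m k := by
  set N := (1 - Q)⁻¹ with hN
  calc x k = ∑ m, x m * (if m = k then (1:ℝ) else 0) := by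
        simp [mul_ite, Finset.sum_ite_eq']
    _ = ∑ m, x m * (N m k - ∑ l, Q m l * N l k) := by
        apply Finset.sum_congr rfl; intro m _
        rw [aux_AN Q hdet m k]
    _ = ∑ m, x m * N m k - ∑ m, x m * ∑ l, Q m l * N l k := by
        rw [← Finset.sum_sub_distrib]
        apply Finset.sum_congr rfl; intro m _; ring
    _ = ∑ m, x m * N m k - ∑ l, (∑ m, x m * Q m l) * N l k := by
        congr 1
        calc ∑ m, x m * ∑ l, Q m l * N l k
            = ∑ m, ∑ l, (x m * Q m l) * N l k := by
              apply Finset.sum_congr rfl; intro m _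
              rw [Finset.mul_sum]; apply Finset.sum_congr rfl; intro l _; ring
          _ = ∑ l, ∑ m, (x m * Q m l) * N l k := Finset.sum_comm
          _ = ∑ l, (∑ m, x m * Q m l) * N l k := by
              apply Finset.sum_congr rfl; intro l _; rw [Finset.sum_mul]
    _ = ∑ m, (x m - ∑ l, x l * Q l m) * N m k := by
        simp [sub_mul, Finset.sum_sub_distrib]
    _ = ∑ m, y m * N m k := by
        apply Finset.sum_congr rfl; intro m _; rw [hxy m]

/-- Entries of `(1-Q)⁻¹` are nonnegative. -/
lemma aux_N_nonneg (Q : Matrix (Fin S) (Fin S) ℝ) (hQ : ∀ i k, 0 ≤ Q i k)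
    (t : Fin S → ℝ) (ht : ∀ i, 0 < t i)
    (heq : ∀ i, t i = 1 + ∑ k, Q i k * t k) (i k : Fin S) :
    0 ≤ (1 - Q)⁻¹ i k := by
  have hdet := aux_det Q hQ t ht heq
  refine aux_nonneg_sol Q hQ t ht heq (fun i => (1 - Q)⁻¹ i k)
    (fun i => if i = k then 1 else 0) (fun i => by positivity) (fun i' => ?_) i
  have := aux_AN Q hdet i' k
  linarith

/-- Row sums of `(1-Q)⁻¹` recover `t`. -/
lemma aux_rowsum (Q : Matrix (Fin S) (Fin S) ℝ) (hQ : ∀ i k, 0 ≤ Q i k)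
    (t : Fin S → ℝ) (ht : ∀ i, 0 < t i)
    (heq : ∀ i, t i = 1 + ∑ k, Q i k * t k) (i : Fin S) :
    ∑ k, (1 - Q)⁻¹ i k = t i := by
  have hdet := aux_det Q hQ t ht heq
  have h1 : ∀ i', t i' - ∑ k, Q i' k * t k = (fun _ => (1:ℝ)) i' := by
    intro i'
    simp only []
    have := heq i'
    linarith
  have := aux_solve Q hdet t (fun _ => 1) h1 i
  rw [this]
  simp

/-- Powers of entrywise-nonnegative matrices are entrywise nonnegative. -/
lemma aux_pow_nonneg (P : Matrix (Fin S) (Fin S) ℝ) (hP : ∀ i k, 0 ≤ P i k) (m : ℕ) :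
    ∀ i k, 0 ≤ (P ^ m) i k := by
  induction m with
  | zero => intro i k; simp [Matrix.one_apply]; positivity
  | succ m ih =>
      intro i k
      rw [pow_succ, Matrix.mul_apply]
      exact Finset.sum_nonneg fun l _ => mul_nonneg (ih i l) (hP l k)

/-- Stationarity is preserved under powers. -/
lemma aux_stat_pow (P : Matrix (Fin S) (Fin S) ℝ) (μ : Fin S → ℝ)
    (hs : ∀ j, ∑ i, μ i * P i j = μ j) (m : ℕ) :
    ∀ j, ∑ i, μ i * (P ^ m) i j = μ j := by
  induction m with
  | zero => intro j; simp [Matrix.one_apply, mul_ite, Finset.sum_ite_eq']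
  | succ m ih =>
      intro j
      calc ∑ i, μ i * (P ^ (m + 1)) i j
          = ∑ i, ∑ k, μ i * ((P ^ m) i k * P k j) := by
            apply Finset.sum_congr rfl; intro i _
            rw [pow_succ, Matrix.mul_apply, Finset.mul_sum]
        _ = ∑ k, ∑ i, μ i * ((P ^ m) i k * P k j) := Finset.sum_comm
        _ = ∑ k, (∑ i, μ i * (P ^ m) i k) * P k j := by
            apply Finset.sum_congr rfl; intro k _
            rw [Finset.sum_mul]
            apply Finset.sum_congr rfl; intro i _; ring
        _ = ∑ k, μ k * P k j := by
            apply Finset.sum_congr rfl; intro k _; rw [ih k]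
        _ = μ j := hs j

/-- A stationary distribution of an irreducible nonnegative matrix is positive. -/
lemma aux_mu_pos (P : Matrix (Fin S) (Fin S) ℝ) (hP0 : ∀ i k, 0 ≤ P i k)
    (hirr : MCIrreducible P) (μ : Fin S → ℝ) (hμ : IsStationaryDist P μ) (j : Fin S) :
    0 < μ j := by
  obtain ⟨hnn, hsum, hs⟩ := hμ
  have hex : ∃ i, 0 < μ i := by
    by_contra hcon
    push_neg at hcon
    have : ∀ i ∈ Finset.univ, μ i = 0 := fun i _ => le_antisymm (hcon i) (hnn i)
    rw [Finset.sum_congr rfl this] at hsum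
    simp at hsum
  obtain ⟨i, hi⟩ := hex
  obtain ⟨m, -, hm⟩ := hirr i j
  have hstat := aux_stat_pow P μ hs m j
  rw [← hstat]
  have hterm : μ i * (P ^ m) i j ≤ ∑ k, μ k * (P ^ m) k j := by
    apply Finset.single_le_sum (f := fun k => μ k * (P ^ m) k j)
    · intro k _
      exact mul_nonneg (hnn k) (aux_pow_nonneg P hP0 m k j)
    · exact Finset.mem_univ i
  have : 0 < μ i * (P ^ m) i j := mul_pos hi hm
  linarith

lemma aux_Q_nonneg (P : Matrix (Fin S) (Fin S) ℝ) (hP : ∀ i k, 0 ≤ P i k) (j : Fin S) :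
    ∀ i k, 0 ≤ auxQ P j i k := by
  intro i k
  rw [auxQ_apply]
  split
  · exact le_refl 0
  · exact hP i k

/-- The MFPT recurrence in terms of `auxQ`. -/
lemma aux_mfpt_row (P T : Matrix (Fin S) (Fin S) ℝ) (hT : IsMFPT P T) (j i : Fin S) :
    T i j = 1 + ∑ k, auxQ P j i k * T k j := by
  rw [hT.2 i j, Finset.sum_filter]
  congr 1
  apply Finset.sum_congr rfl
  intro k _
  rw [auxQ_apply]
  by_cases hk : k = j <;> simp [hk]

/-- Stationarity through the absorbed matrix: `μ k = μ j * N j k`. -/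
lemma aux_stat_N (P : Matrix (Fin S) (Fin S) ℝ) (μ : Fin S → ℝ)
    (hs : ∀ j, ∑ i, μ i * P i j = μ j) (j : Fin S)
    (hdet : IsUnit (1 - auxQ P j).det) (k : Fin S) :
    μ k = μ j * (1 - auxQ P j)⁻¹ j k := by
  have hxy : ∀ k, μ k - ∑ m, μ m * auxQ P j m k = (fun k => if k = j then μ j else 0) k := by
    intro k
    simp only []
    by_cases hk : k = j
    · subst hk
      simp [auxQ_apply]
    · have h2 : ∑ m, μ m * auxQ P j m k = ∑ m, μ m * P m k := by
        apply Finset.sum_congr rfl; intro m _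
        rw [auxQ_apply, if_neg hk]
      rw [h2, hs k, if_neg hk]
      ring
  have h := aux_solve_row (auxQ P j) hdet μ (fun k => if k = j then μ j else 0) hxy k
  rw [h]
  simp [ite_mul, Finset.sum_ite_eq]

/-- Kac's formula: `μ m * T m m = 1`. -/
lemma aux_kac (P : Matrix (Fin S) (Fin S) ℝ) (hP : RowStochastic P)
    (μ : Fin S → ℝ) (hμ : IsStationaryDist P μ)
    (T : Matrix (Fin S) (Fin S) ℝ) (hT : IsMFPT P T) (m : Fin S) :
    μ m * T m m = 1 := by
  have hQ := aux_Q_nonneg P hP.1 m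
  have ht : ∀ i, 0 < T i m := fun i => hT.1 i m
  have heq := fun i => aux_mfpt_row P T hT m i
  have hdet := aux_det (auxQ P m) hQ (fun i => T i m) ht heq
  have hrow := aux_rowsum (auxQ P m) hQ (fun i => T i m) ht heq m
  have hstat := fun k => aux_stat_N P μ hμ.2.2 m hdet k
  calc μ m * T m m = μ m * ∑ k, (1 - auxQ P m)⁻¹ m k := by rw [hrow]
    _ = ∑ k, μ m * (1 - auxQ P m)⁻¹ m k := by rw [Finset.mul_sum]
    _ = ∑ k, μ k := by apply Finset.sum_congr rfl; intro k _; rw [← hstat k]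
    _ = 1 := hμ.2.1

lemma aux_sum_drop (f : Fin S → ℝ) (j : Fin S) :
    ∑ k, (if k = j then 0 else f k) = ∑ k, f k - f j := by
  have h : ∀ k, (if k = j then (0:ℝ) else f k) = f k - (if k = j then f k else 0) := by
    intro k; split <;> simp
  rw [Finset.sum_congr rfl (fun k _ => h k), Finset.sum_sub_distrib, Finset.sum_ite_eq']
  simp

lemma aux_norm_le (E : Matrix (Fin S) (Fin S) ℝ) (a b : Fin S) :
    |E a b| ≤ matNormInf E := by
  have h1 : |E a b| ≤ ⨆ j, |E a j| :=
    le_ciSup (f := fun j => |E a j|) (Set.Finite.bddAbove (Set.finite_range _)) b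
  have h2 : (⨆ j, |E a j|) ≤ ⨆ i, ⨆ j, |E i j| :=
    le_ciSup (f := fun i => ⨆ j, |E i j|) (Set.Finite.bddAbove (Set.finite_range _)) a
  exact le_trans h1 h2

/-- The occupation identity: for `n ≠ j`,
`N i n = μ n * (T i j + T j n - T i n) + δ_{i n}`. -/
lemma aux_occ (P : Matrix (Fin S) (Fin S) ℝ) (hP : RowStochastic P)
    (T : Matrix (Fin S) (Fin S) ℝ) (hT : IsMFPT P T)
    (μ : Fin S → ℝ) (n j : Fin S) (hnj : n ≠ j) (hkac : μ n * T n n = 1) (i : Fin S) :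
    (1 - auxQ P j)⁻¹ i n = μ n * (T i j + T j n - T i n) + (if i = n then 1 else 0) := by
  have hQ0 := aux_Q_nonneg P hP.1 j
  have ht : ∀ i, 0 < T i j := fun i => hT.1 i j
  have heq := fun i => aux_mfpt_row P T hT j i
  have hdet := aux_det (auxQ P j) hQ0 (fun i => T i j) ht heq
  set w : Fin S → ℝ := fun i => μ n * (T i j + T j n - T i n) + (if i = n then 1 else 0)
    with hw
  have hxy : ∀ i', w i' - ∑ k, auxQ P j i' k * w k = (fun i' => if i' = n then (1:ℝ) else 0) i' := by
    intro i'
    simp only []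
    have hA : ∑ k, auxQ P j i' k * T k j = T i' j - 1 := by
      have := heq i'; linarith
    have hQsum : ∑ k, auxQ P j i' k = 1 - P i' j := by
      have : ∀ k, auxQ P j i' k = if k = j then 0 else P i' k := fun k => rfl
      rw [Finset.sum_congr rfl (fun k _ => this k), aux_sum_drop, hP.2 i']
    have hCn : ∑ k, auxQ P n i' k * T k n = T i' n - 1 := by
      have := aux_mfpt_row P T hT n i'; linarith
    have hC : ∑ k, auxQ P j i' k * T k n
        = (T i' n - 1) + P i' n * T n n - P i' j * T j n := by
      have h1 : ∑ k, auxQ P j i' k * T k n = ∑ k, P i' k * T k n - P i' j * T j n := by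
        have : ∀ k, auxQ P j i' k * T k n = if k = j then 0 else P i' k * T k n := by
          intro k; rw [auxQ_apply]; split <;> simp
        rw [Finset.sum_congr rfl (fun k _ => this k), aux_sum_drop]
      have h2 : ∑ k, P i' k * T k n = (∑ k, auxQ P n i' k * T k n) + P i' n * T n n := by
        have : ∀ k, P i' k * T k n
            = (if k = n then 0 else P i' k) * T k n + (if k = n then P i' k * T k n else 0) := by
          intro k; split <;> simp
        rw [Finset.sum_congr rfl (fun k _ => this k), Finset.sum_add_distrib,
          Finset.sum_ite_eq']
        simp [auxQ_apply]
      rw [h1, h2, hCn]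
    have hsplit : ∑ k, auxQ P j i' k * w k
        = μ n * (∑ k, auxQ P j i' k * T k j) + μ n * ((∑ k, auxQ P j i' k) * T j n)
          - μ n * (∑ k, auxQ P j i' k * T k n) + auxQ P j i' n := by
      have : ∀ k, auxQ P j i' k * w k
          = μ n * (auxQ P j i' k * T k j) + μ n * (auxQ P j i' k * T j n)
            - μ n * (auxQ P j i' k * T k n) + (if k = n then auxQ P j i' k else 0) := by
        intro k
        rw [hw]
        simp only []
        split <;> ring
      rw [Finset.sum_congr rfl (fun k _ => this k)]
      simp only [Finset.sum_add_distrib, Finset.sum_sub_distrib, ← Finset.mul_sum,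
        Finset.sum_ite_eq', Finset.mem_univ, if_pos]
      rw [Finset.sum_mul]
    have hQin : auxQ P j i' n = P i' n := by
      rw [auxQ_apply, if_neg hnj]
    rw [hsplit, hA, hQsum, hC, hQin, hw]
    simp only []
    linear_combination (P i' n) * hkac
  have h3 := aux_solve (auxQ P j) hdet w (fun i' => if i' = n then 1 else 0) hxy i
  have h4 : w i = (1 - auxQ P j)⁻¹ i n := by
    rw [h3]; simp [mul_ite, Finset.sum_ite_eq']
  exact h4.symm

/-- Single-row perturbation bound for mean first passage times: if irreducible
row-stochastic `P` and `P̃` differ only in their `n`-th row and all mean first passage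
times of `P` are at most `D′`, then for all `i ≠ j`,
`|T̃_{ij} − T_{ij}| ≤ (μ_j / μ̃_j) · ‖E‖_∞ · S · D′²`. -/
theorem mfpt_single_row_perturbation
    {S : ℕ}
    (P Pt : Matrix (Fin S) (Fin S) ℝ)
    (hP : RowStochastic P) (hPt : RowStochastic Pt)
    (hirr : MCIrreducible P) (hirrt : MCIrreducible Pt)
    (n : Fin S)
    (hrow : ∀ i, i ≠ n → ∀ k, P i k = Pt i k)
    (μ μt : Fin S → ℝ)
    (hμ : IsStationaryDist P μ) (hμt : IsStationaryDist Pt μt)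
    (T Tt : Matrix (Fin S) (Fin S) ℝ)
    (hT : IsMFPT P T) (hTt : IsMFPT Pt Tt)
    (D' : ℝ) (hD' : 1 ≤ D')
    (hTD : ∀ i j, T i j ≤ D') :
    ∀ i j, i ≠ j →
      |Tt i j - T i j| ≤ (μ j / μt j) * matNormInf (Pt - P) * S * D' ^ 2 := by
  intro i j hij
  have hP0 := hP.1
  have hPsum := hP.2
  have hPt0 := hPt.1
  have hPtsum := hPt.2
  have hμpos : ∀ k, 0 < μ k := aux_mu_pos P hP0 hirr μ hμ
  have hμtpos : ∀ k, 0 < μt k := aux_mu_pos Pt hPt0 hirrt μt hμt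
  have hQ0 := aux_Q_nonneg P hP0 j
  have hQt0 := aux_Q_nonneg Pt hPt0 j
  have ht : ∀ i', 0 < T i' j := fun i' => hT.1 i' j
  have htt : ∀ i', 0 < Tt i' j := fun i' => hTt.1 i' j
  have heq := fun i' => aux_mfpt_row P T hT j i'
  have heqt := fun i' => aux_mfpt_row Pt Tt hTt j i'
  have hdet := aux_det (auxQ P j) hQ0 _ ht heq
  have hdett := aux_det (auxQ Pt j) hQt0 _ htt heqt
  have hN0 : ∀ a b, 0 ≤ (1 - auxQ P j)⁻¹ a b := aux_N_nonneg (auxQ P j) hQ0 _ ht heq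
  have hNt0 : ∀ a b, 0 ≤ (1 - auxQ Pt j)⁻¹ a b := aux_N_nonneg (auxQ Pt j) hQt0 _ htt heqt
  have hQrow : ∀ i', i' ≠ n → ∀ k, auxQ P j i' k = auxQ Pt j i' k := by
    intro i' hi' k
    rw [auxQ_apply, auxQ_apply, hrow i' hi' k]
  have hEnn : ∀ a b, |Pt a b - P a b| ≤ matNormInf (Pt - P) := by
    intro a b
    have := aux_norm_le (Pt - P) a b
    simpa [Matrix.sub_apply] using this
  have hEpos : 0 ≤ matNormInf (Pt - P) := le_trans (abs_nonneg _) (hEnn n n)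
  have hD0 : (0:ℝ) < D' := lt_of_lt_of_le one_pos hD'
  have hS1 : (1:ℝ) ≤ (S:ℝ) := by
    have : 0 < S := n.pos
    exact_mod_cast this
  have hRHS0 : 0 ≤ (μ j / μt j) * matNormInf (Pt - P) * S * D' ^ 2 := by
    apply mul_nonneg
    apply mul_nonneg
    apply mul_nonneg
    · exact div_nonneg (le_of_lt (hμpos j)) (le_of_lt (hμtpos j))
    · exact hEpos
    · positivity
    · positivity
  -- the perturbation constant and the basic identity Δ = c · Nt · n
  set c := ∑ k, (auxQ Pt j n k - auxQ P j n k) * T k j with hc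
  have hΔxy : ∀ i', (Tt i' j - T i' j) - ∑ k, auxQ Pt j i' k * (Tt k j - T k j)
      = (fun i' => if i' = n then c else 0) i' := by
    intro i'
    simp only []
    have h1 : Tt i' j - ∑ k, auxQ Pt j i' k * Tt k j = 1 := by have := heqt i'; linarith
    have h2 : T i' j - ∑ k, auxQ P j i' k * T k j = 1 := by have := heq i'; linarith
    have h3 : ∑ k, auxQ Pt j i' k * (Tt k j - T k j)
        = ∑ k, auxQ Pt j i' k * Tt k j - ∑ k, auxQ Pt j i' k * T k j := by
      simp [mul_sub, Finset.sum_sub_distrib]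
    by_cases hi' : i' = n
    · rw [hi'] at h1 h2 h3 ⊢
      rw [if_pos rfl, h3, hc]
      have h4 : ∑ k, (auxQ Pt j n k - auxQ P j n k) * T k j
          = ∑ k, auxQ Pt j n k * T k j - ∑ k, auxQ P j n k * T k j := by
        simp [sub_mul, Finset.sum_sub_distrib]
      rw [h4]
      linarith
    · rw [if_neg hi', h3]
      have h5 : ∑ k, auxQ Pt j i' k * T k j = ∑ k, auxQ P j i' k * T k j :=
        Finset.sum_congr rfl (fun k _ => by rw [hQrow i' hi' k])
      linarith
  have hΔ : ∀ i', Tt i' j - T i' j = c * (1 - auxQ Pt j)⁻¹ i' n := by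
    intro i'
    have h6 := aux_solve (auxQ Pt j) hdett (fun i' => Tt i' j - T i' j)
      (fun i' => if i' = n then c else 0) hΔxy i'
    rw [h6]
    rw [Finset.sum_congr rfl (fun k _ => mul_ite (k = n) ((1 - auxQ Pt j)⁻¹ i' k) c 0)]
    simp only [mul_zero]
    rw [Finset.sum_ite_eq' Finset.univ n (fun k => (1 - auxQ Pt j)⁻¹ i' k * c)]
    simp [mul_comm]
  by_cases hnj : n = j
  · -- trivial case: the perturbed row is the target column; passage times agree
    have hNtin : (1 - auxQ Pt j)⁻¹ i n = 0 := by
      have hxy : ∀ i', ((if i' = n then (1:ℝ) else 0)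
          - ∑ k, auxQ Pt j i' k * (if k = n then (1:ℝ) else 0))
          = (fun i' => if i' = n then (1:ℝ) else 0) i' := by
        intro i'
        simp only []
        have hz : ∀ k, auxQ Pt j i' k * (if k = n then (1:ℝ) else 0) = 0 := by
          intro k
          rw [auxQ_apply]
          by_cases hk : k = n
          · rw [hk, hnj]; simp
          · simp [hk]
        rw [Finset.sum_congr rfl (fun k _ => hz k)]
        simp
      have h7 := aux_solve (auxQ Pt j) hdett (fun i' => if i' = n then (1:ℝ) else 0)
        (fun i' => if i' = n then (1:ℝ) else 0) hxy i
      have h8 : ∑ k, (1 - auxQ Pt j)⁻¹ i k * (if k = n then (1:ℝ) else 0)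
          = (1 - auxQ Pt j)⁻¹ i n := by
        rw [Finset.sum_congr rfl
          (fun k _ => mul_ite (k = n) ((1 - auxQ Pt j)⁻¹ i k) 1 0)]
        simp only [mul_zero, mul_one]
        rw [Finset.sum_ite_eq' Finset.univ n (fun k => (1 - auxQ Pt j)⁻¹ i k)]
        simp
      rw [h8] at h7
      rw [← h7, if_neg (by rw [hnj]; exact hij)]
    rw [hΔ i, hNtin, mul_zero, abs_zero]
    exact hRHS0
  · -- main case n ≠ j
    have hkac := aux_kac P hP μ hμ T hT n
    have hocc := fun i' => aux_occ P hP T hT μ n j hnj hkac i'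
    have hNbound : ∀ i', (1 - auxQ P j)⁻¹ i' n ≤ μ n * (T i' j + T j n) := by
      intro i'
      rw [hocc i']
      by_cases hi' : i' = n
      · rw [hi']
        rw [if_pos rfl]
        have : μ n * (T n j + T j n - T n n) + μ n * T n n = μ n * (T n j + T j n) := by ring
        linarith [hkac]
      · rw [if_neg hi']
        have h9 : 0 ≤ μ n * T i' n := mul_nonneg (le_of_lt (hμpos n)) (le_of_lt (hT.1 i' n))
        have h10 : μ n * (T i' j + T j n - T i' n)
            = μ n * (T i' j + T j n) - μ n * T i' n := by ring
        linarith
    set a := ∑ k, (auxQ Pt j n k - auxQ P j n k) * (1 - auxQ P j)⁻¹ k n with ha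
    have hres : ∀ i', (1 - auxQ P j)⁻¹ i' n = (1 - auxQ Pt j)⁻¹ i' n * (1 - a) := by
      intro i'
      have hxy : ∀ i'', ((1 - auxQ P j)⁻¹ i'' n
          - ∑ k, auxQ Pt j i'' k * (1 - auxQ P j)⁻¹ k n)
          = (fun i'' => if i'' = n then 1 - a else 0) i'' := by
        intro i''
        simp only []
        have hAN := aux_AN (auxQ P j) hdet i'' n
        by_cases hi'' : i'' = n
        · rw [hi''] at hAN ⊢
          rw [if_pos rfl]
          rw [if_pos rfl] at hAN
          have hd : ∑ k, auxQ Pt j n k * (1 - auxQ P j)⁻¹ k n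
              - ∑ k, auxQ P j n k * (1 - auxQ P j)⁻¹ k n = a := by
            rw [ha]
            simp [sub_mul, Finset.sum_sub_distrib]
          linarith
        · rw [if_neg hi'']
          rw [if_neg hi''] at hAN
          have h11 : ∑ k, auxQ Pt j i'' k * (1 - auxQ P j)⁻¹ k n
              = ∑ k, auxQ P j i'' k * (1 - auxQ P j)⁻¹ k n :=
            Finset.sum_congr rfl (fun k _ => by rw [hQrow i'' hi'' k])
          linarith
      have h12 := aux_solve (auxQ Pt j) hdett (fun i'' => (1 - auxQ P j)⁻¹ i'' n)
        (fun i'' => if i'' = n then 1 - a else 0) hxy i'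
      rw [h12]
      rw [Finset.sum_congr rfl
        (fun k _ => mul_ite (k = n) ((1 - auxQ Pt j)⁻¹ i' k) (1 - a) 0)]
      simp only [mul_zero]
      rw [Finset.sum_ite_eq' Finset.univ n (fun k => (1 - auxQ Pt j)⁻¹ i' k * (1 - a))]
      simp
    have hstatN : ∀ k, μ k = μ j * (1 - auxQ P j)⁻¹ j k :=
      fun k => aux_stat_N P μ hμ.2.2 j hdet k
    have hstatNt : ∀ k, μt k = μt j * (1 - auxQ Pt j)⁻¹ j k :=
      fun k => aux_stat_N Pt μt hμt.2.2 j hdett k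
    have hkey : (1 - a) * (μ j * μt n) = μ n * μt j := by
      linear_combination (1 - a) * μ j * (hstatNt n) - μt j * (hstatN n)
        - μ j * μt j * (hres j)
    -- bound for Nt i n
    have e1 : (1 - auxQ Pt j)⁻¹ i n * (μ n * μt j)
        = (1 - auxQ P j)⁻¹ i n * (μ j * μt n) := by
      linear_combination - (μ j * μt n) * (hres i) - (1 - auxQ Pt j)⁻¹ i n * hkey
    have hTsum2D : T i j + T j n ≤ 2 * D' := by
      have := hTD i j; have := hTD j n; linarith
    have e2 : (1 - auxQ P j)⁻¹ i n * (μ j * μt n)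
        ≤ (μ n * (2 * D')) * (μ j * μt n) := by
      have h13 : (1 - auxQ P j)⁻¹ i n ≤ μ n * (2 * D') := by
        refine le_trans (hNbound i) ?_
        have := hμpos n
        nlinarith
      exact mul_le_mul_of_nonneg_right h13
        (le_of_lt (mul_pos (hμpos j) (hμtpos n)))
    have e3 : (1 - auxQ Pt j)⁻¹ i n * (μ n * μt j) ≤ μ n * (2 * D') * (μ j * μt n) :=
      le_trans (le_of_eq e1) e2
    have e4 : (1 - auxQ Pt j)⁻¹ i n * μt j ≤ 2 * D' * (μ j * μt n) := by
      have e3' : μ n * ((1 - auxQ Pt j)⁻¹ i n * μt j)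
          ≤ μ n * (2 * D' * (μ j * μt n)) := by nlinarith [e3]
      exact le_of_mul_le_mul_left e3' (hμpos n)
    have e5 : (1 - auxQ Pt j)⁻¹ i n ≤ 2 * D' * (μ j * μt n) / μt j := by
      rw [le_div_iff₀ (hμtpos j)]
      exact e4
    -- bound on |c|
    have hcbound : |c| ≤ (S:ℝ) * (matNormInf (Pt - P) * (D' / 2)) := by
      have hq : ∑ k, auxQ P j n k = 1 - P n j := by
        have hq1 : ∀ k, auxQ P j n k = if k = j then 0 else P n k := fun k => rfl
        rw [Finset.sum_congr rfl (fun k _ => hq1 k), aux_sum_drop, hPsum n]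
      have hqt : ∑ k, auxQ Pt j n k = 1 - Pt n j := by
        have hq1 : ∀ k, auxQ Pt j n k = if k = j then 0 else Pt n k := fun k => rfl
        rw [Finset.sum_congr rfl (fun k _ => hq1 k), aux_sum_drop, hPtsum n]
      have hsum1 : ∑ k, (auxQ Pt j n k - auxQ P j n k) = P n j - Pt n j := by
        rw [Finset.sum_sub_distrib, hq, hqt]; ring
      have hsplitc : c = (∑ k, (auxQ Pt j n k - auxQ P j n k) * (T k j - D' / 2))
          + (D' / 2) * (P n j - Pt n j) := by
        rw [hc]
        have h14 : ∀ k, (auxQ Pt j n k - auxQ P j n k) * T k j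
            = (auxQ Pt j n k - auxQ P j n k) * (T k j - D' / 2)
              + (D' / 2) * (auxQ Pt j n k - auxQ P j n k) := by
          intro k; ring
        rw [Finset.sum_congr rfl (fun k _ => h14 k), Finset.sum_add_distrib,
          ← Finset.mul_sum, hsum1]
      have h15 : |∑ k, (auxQ Pt j n k - auxQ P j n k) * (T k j - D' / 2)|
          ≤ (S:ℝ) * (matNormInf (Pt - P) * (D' / 2)) - matNormInf (Pt - P) * (D' / 2) := by
        have hterm : ∀ k, |(auxQ Pt j n k - auxQ P j n k) * (T k j - D' / 2)|
            ≤ if k = j then 0 else matNormInf (Pt - P) * (D' / 2) := by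
          intro k
          by_cases hk : k = j
          · subst hk
            simp [auxQ_apply]
          · rw [if_neg hk, abs_mul]
            have hq2 : auxQ Pt j n k - auxQ P j n k = Pt n k - P n k := by
              rw [auxQ_apply, auxQ_apply, if_neg hk, if_neg hk]
            rw [hq2]
            have hb1 : |Pt n k - P n k| ≤ matNormInf (Pt - P) := hEnn n k
            have hb2 : |T k j - D' / 2| ≤ D' / 2 := by
              rw [abs_le]
              constructor
              · have := ht k; linarith
              · have := hTD k j; linarith
            exact mul_le_mul hb1 hb2 (abs_nonneg _) hEpos
        calc |∑ k, (auxQ Pt j n k - auxQ P j n k) * (T k j - D' / 2)|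
            ≤ ∑ k, |(auxQ Pt j n k - auxQ P j n k) * (T k j - D' / 2)| :=
              Finset.abs_sum_le_sum_abs _ _
          _ ≤ ∑ k, (if k = j then 0 else matNormInf (Pt - P) * (D' / 2)) :=
              Finset.sum_le_sum (fun k _ => hterm k)
          _ = (∑ _k : Fin S, matNormInf (Pt - P) * (D' / 2))
              - matNormInf (Pt - P) * (D' / 2) := aux_sum_drop _ j
          _ = (S:ℝ) * (matNormInf (Pt - P) * (D' / 2))
              - matNormInf (Pt - P) * (D' / 2) := by
              rw [Finset.sum_const, Finset.card_univ, Fintype.card_fin, nsmul_eq_mul]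
      have h16 : |(D' / 2) * (P n j - Pt n j)| ≤ matNormInf (Pt - P) * (D' / 2) := by
        rw [abs_mul, abs_of_nonneg (by linarith : (0:ℝ) ≤ D' / 2), abs_sub_comm]
        calc (D' / 2) * |Pt n j - P n j| ≤ (D' / 2) * matNormInf (Pt - P) :=
              mul_le_mul_of_nonneg_left (hEnn n j) (by linarith)
          _ = matNormInf (Pt - P) * (D' / 2) := by ring
      calc |c| = |(∑ k, (auxQ Pt j n k - auxQ P j n k) * (T k j - D' / 2))
            + (D' / 2) * (P n j - Pt n j)| := by rw [← hsplitc]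
        _ ≤ |∑ k, (auxQ Pt j n k - auxQ P j n k) * (T k j - D' / 2)|
            + |(D' / 2) * (P n j - Pt n j)| := abs_add_le _ _
        _ ≤ (S:ℝ) * (matNormInf (Pt - P) * (D' / 2)) := by linarith
    -- final combination
    have habs : |Tt i j - T i j| = |c| * (1 - auxQ Pt j)⁻¹ i n := by
      rw [hΔ i, abs_mul, abs_of_nonneg (hNt0 i n)]
    have hA0 : 0 ≤ (S:ℝ) * (matNormInf (Pt - P) * (D' / 2)) := by positivity
    have e6 : |c| * (1 - auxQ Pt j)⁻¹ i n
        ≤ ((S:ℝ) * (matNormInf (Pt - P) * (D' / 2))) * (2 * D' * (μ j * μt n) / μt j) :=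
      mul_le_mul hcbound e5 (hNt0 i n) hA0
    have hμtn1 : μt n ≤ 1 := by
      have hsum := hμt.2.1
      have := Finset.single_le_sum (f := fun k => μt k)
        (fun k _ => le_of_lt (hμtpos k)) (Finset.mem_univ n)
      linarith
    have e7 : ((S:ℝ) * (matNormInf (Pt - P) * (D' / 2))) * (2 * D' * (μ j * μt n) / μt j)
        = (μ j / μt j) * matNormInf (Pt - P) * (S:ℝ) * D' ^ 2 * μt n := by
      field_simp
    have e8 : (μ j / μt j) * matNormInf (Pt - P) * (S:ℝ) * D' ^ 2 * μt n
        ≤ (μ j / μt j) * matNormInf (Pt - P) * (S:ℝ) * D' ^ 2 :=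
      mul_le_of_le_one_right hRHS0 hμtn1
    rw [habs]
    calc |c| * (1 - auxQ Pt j)⁻¹ i n
        ≤ ((S:ℝ) * (matNormInf (Pt - P) * (D' / 2))) * (2 * D' * (μ j * μt n) / μt j) := e6
      _ = (μ j / μt j) * matNormInf (Pt - P) * (S:ℝ) * D' ^ 2 * μt n := e7
      _ ≤ (μ j / μt j) * matNormInf (Pt - P) * (S:ℝ) * D' ^ 2 := e8
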